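/- arXiv:0905.3121 — 3 statements merged into one kernel-verified Lean document; each statement's English description precedes it below -/
import Mathlib

section
/- In F₂[x, y, z], the kernel of the derivation d = x² ∂/∂x + y² ∂/∂y + z² ∂/∂z, intersected with the span of even-degree elements that are killed also by the derivation d₁ = x⁴ ∂/∂x + y⁴ ∂/∂y + z⁴ ∂/∂z, equals F₂[x², y², z²] in even degrees. Precisely: every even-degree polynomial f ∈ F₂[x,y,z] with d(f) = 0 and d₁(f) = 0 lies in F₂[x², y², z²]. -/
open MvPolynomial Finsupp

/-! ### Auxiliary machinery -/

private abbrev P3 := MvPolynomial (Fin 3) (ZMod 2)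

/-- The part of `f` supported on monomials whose exponents have parities `(a, b, c)`. -/
private noncomputable def par (f : P3) (a b c : ℕ) : P3 :=
  ∑ m ∈ f.support.filter (fun m => m 0 % 2 = a ∧ m 1 % 2 = b ∧ m 2 % 2 = c),
    monomial m (coeff m f)

private lemma coeff_par (f : P3) (a b c : ℕ) (n : Fin 3 →₀ ℕ) :
    coeff n (par f a b c) =
      if n 0 % 2 = a ∧ n 1 % 2 = b ∧ n 2 % 2 = c then coeff n f else 0 := by
  classical
  unfold par
  rw [coeff_sum]
  simp only [coeff_monomial]
  rw [Finset.sum_ite_eq' ]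
  simp only [Finset.mem_filter, MvPolynomial.mem_support_iff]
  by_cases hp : n 0 % 2 = a ∧ n 1 % 2 = b ∧ n 2 % 2 = c
  · by_cases h0 : coeff n f = 0 <;> simp [hp, h0]
  · simp [hp]

private lemma par_support (f : P3) (a b c : ℕ) :
    ∀ m ∈ (par f a b c).support, m 0 % 2 = a ∧ m 1 % 2 = b ∧ m 2 % 2 = c := by
  intro m hm
  rw [MvPolynomial.mem_support_iff, coeff_par] at hm
  by_contra h
  simp [if_neg h] at hm

private lemma par_decomp (f : P3) (heven : ∀ m ∈ f.support, Even (m.sum fun _ e => e)) :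
    f = par f 0 0 0 + par f 1 1 0 + par f 1 0 1 + par f 0 1 1 := by
  apply MvPolynomial.ext
  intro n
  simp only [coeff_add, coeff_par]
  by_cases hn : coeff n f = 0
  · rw [hn]; split_ifs <;> simp [hn]
  · have he := heven n (by rwa [MvPolynomial.mem_support_iff])
    have hsum : (n.sum fun _ e => e) = n 0 + n 1 + n 2 := by
      rw [Finsupp.sum_fintype _ _ (fun _ => rfl), Fin.sum_univ_three]
    rw [hsum, Nat.even_iff] at he
    have h0 := Nat.mod_two_eq_zero_or_one (n 0)
    have h1 := Nat.mod_two_eq_zero_or_one (n 1)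
    have h2 := Nat.mod_two_eq_zero_or_one (n 2)
    rcases h0 with h0|h0 <;> rcases h1 with h1|h1 <;> rcases h2 with h2|h2 <;>
      first
        | (exfalso; omega)
        | simp [h0, h1, h2]

private lemma pderiv_eq_zero_of_even (i : Fin 3) (g : P3)
    (h : ∀ m ∈ g.support, m i % 2 = 0) : pderiv i g = 0 := by
  conv_lhs => rw [g.as_sum]
  rw [map_sum]
  refine Finset.sum_eq_zero fun m hm => ?_
  rw [pderiv_monomial]
  have hz : ((m i : ZMod 2)) = 0 := by
    rw [← ZMod.natCast_mod, h m hm, Nat.cast_zero]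
  rw [hz, mul_zero, monomial_zero]

private lemma support_pow_mul_pderiv (i : Fin 3) (e : ℕ) (g : P3) :
    ∀ n ∈ (X i ^ e * pderiv i g : P3).support,
      ∃ m ∈ g.support, m i % 2 = 1 ∧ n = single i e + (m - single i 1) := by
  intro n hn
  rw [MvPolynomial.mem_support_iff] at hn
  have hrw : (X i ^ e * pderiv i g : P3)
      = ∑ m ∈ g.support, monomial (single i e + (m - single i 1))
          ((1 : ZMod 2) * (coeff m g * (m i : ZMod 2))) := by
    conv_lhs => rw [g.as_sum, map_sum, Finset.mul_sum]
    refine Finset.sum_congr rfl fun m hm => ?_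
    rw [pderiv_monomial, X_pow_eq_monomial, monomial_mul]
  rw [hrw, coeff_sum] at hn
  obtain ⟨m, hm, hne⟩ := Finset.exists_ne_zero_of_sum_ne_zero hn
  rw [coeff_monomial] at hne
  by_cases heq : single i e + (m - single i 1) = n
  · rw [if_pos heq, one_mul] at hne
    have hodd : m i % 2 = 1 := by
      rcases Nat.mod_two_eq_zero_or_one (m i) with h'|h'
      · exfalso
        apply hne
        have : ((m i : ZMod 2)) = 0 := by rw [← ZMod.natCast_mod, h', Nat.cast_zero]
        rw [this, mul_zero]
      · exact h'
    exact ⟨m, hm, hodd, heq.symm⟩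
  · rw [if_neg heq] at hne; exact absurd rfl hne

private lemma eq_zero_of_pderiv_eq_zero (i : Fin 3) (g : P3)
    (h : ∀ m ∈ g.support, m i % 2 = 1) (hp : pderiv i g = 0) : g = 0 := by
  by_contra hg
  obtain ⟨m₀, hm₀⟩ := (MvPolynomial.support_nonempty.mpr hg)
  have hco : coeff (m₀ - single i 1) (pderiv i g) = coeff m₀ g * (m₀ i : ZMod 2) := by
    conv_lhs => rw [g.as_sum, map_sum, coeff_sum]
    simp only [pderiv_monomial, coeff_monomial]
    rw [Finset.sum_eq_single m₀]
    · rw [if_pos rfl]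
    · intro m hm hne
      rw [if_neg]
      intro hEq
      apply hne
      have h1 : single i 1 ≤ m := single_le_iff.mpr (by have := h m hm; omega)
      have h2 : single i 1 ≤ m₀ := single_le_iff.mpr (by have := h m₀ hm₀; omega)
      calc m = m - single i 1 + single i 1 := (tsub_add_cancel_of_le h1).symm
        _ = m₀ - single i 1 + single i 1 := by rw [hEq]
        _ = m₀ := tsub_add_cancel_of_le h2
    · intro hm; exact absurd hm₀ hm
  have hz : coeff m₀ g * (m₀ i : ZMod 2) = 0 := by rw [← hco, hp, coeff_zero]
  have hcast : ((m₀ i : ZMod 2)) = 1 := by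
    rw [← ZMod.natCast_mod, h m₀ hm₀, Nat.cast_one]
  rw [hcast, mul_one] at hz
  exact (MvPolynomial.mem_support_iff.mp hm₀) hz

private lemma sep {u v w : P3} {p q r : (Fin 3 →₀ ℕ) → Prop}
    (hu : ∀ m ∈ u.support, p m) (hv : ∀ m ∈ v.support, q m) (hw : ∀ m ∈ w.support, r m)
    (hpq : ∀ m, p m → ¬ q m) (hpr : ∀ m, p m → ¬ r m)
    (hs : u + v + w = 0) : u = 0 := by
  apply MvPolynomial.ext; intro n
  rw [coeff_zero]
  by_contra hne
  have hnu : n ∈ u.support := MvPolynomial.mem_support_iff.2 hne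
  have hv0 : coeff n v = 0 := by
    by_contra h'; exact hpq n (hu n hnu) (hv n (MvPolynomial.mem_support_iff.2 h'))
  have hw0 : coeff n w = 0 := by
    by_contra h'; exact hpr n (hu n hnu) (hw n (MvPolynomial.mem_support_iff.2 h'))
  have hc := congrArg (coeff n) hs
  rw [coeff_add, coeff_add, hv0, hw0, add_zero, add_zero, coeff_zero] at hc
  exact hne hc

private lemma term_parity0 (g : P3) (a b c e : ℕ)
    (hg : ∀ m ∈ g.support, m 0 % 2 = a ∧ m 1 % 2 = b ∧ m 2 % 2 = c) (he : e % 2 = 0) :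
    ∀ n ∈ (X 0 ^ e * pderiv 0 g : P3).support,
      n 0 % 2 = (a + 1) % 2 ∧ n 1 % 2 = b % 2 ∧ n 2 % 2 = c % 2 := by
  intro n hn
  obtain ⟨m, hm, hodd, rfl⟩ := support_pow_mul_pderiv 0 e g n hn
  have hps := hg m hm
  simp only [Finsupp.add_apply, Finsupp.tsub_apply, Finsupp.single_apply, Fin.ext_iff]
  norm_num
  omega

private lemma term_parity1 (g : P3) (a b c e : ℕ)
    (hg : ∀ m ∈ g.support, m 0 % 2 = a ∧ m 1 % 2 = b ∧ m 2 % 2 = c) (he : e % 2 = 0) :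
    ∀ n ∈ (X 1 ^ e * pderiv 1 g : P3).support,
      n 0 % 2 = a % 2 ∧ n 1 % 2 = (b + 1) % 2 ∧ n 2 % 2 = c % 2 := by
  intro n hn
  obtain ⟨m, hm, hodd, rfl⟩ := support_pow_mul_pderiv 1 e g n hn
  have hps := hg m hm
  simp only [Finsupp.add_apply, Finsupp.tsub_apply, Finsupp.single_apply, Fin.ext_iff]
  norm_num
  omega

private lemma term_parity2 (g : P3) (a b c e : ℕ)
    (hg : ∀ m ∈ g.support, m 0 % 2 = a ∧ m 1 % 2 = b ∧ m 2 % 2 = c) (he : e % 2 = 0) :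
    ∀ n ∈ (X 2 ^ e * pderiv 2 g : P3).support,
      n 0 % 2 = a % 2 ∧ n 1 % 2 = b % 2 ∧ n 2 % 2 = (c + 1) % 2 := by
  intro n hn
  obtain ⟨m, hm, hodd, rfl⟩ := support_pow_mul_pderiv 2 e g n hn
  have hps := hg m hm
  simp only [Finsupp.add_apply, Finsupp.tsub_apply, Finsupp.single_apply, Fin.ext_iff]
  norm_num
  omega

private lemma even_mem_adjoin (A : P3)
    (h : ∀ m ∈ A.support, m 0 % 2 = 0 ∧ m 1 % 2 = 0 ∧ m 2 % 2 = 0) :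
    A ∈ Algebra.adjoin (ZMod 2) ({X 0 ^ 2, X 1 ^ 2, X 2 ^ 2} : Set P3) := by
  have hs : (∑ m ∈ A.support, monomial m (coeff m A)) ∈
      Algebra.adjoin (ZMod 2) ({X 0 ^ 2, X 1 ^ 2, X 2 ^ 2} : Set P3) := by
    refine Subalgebra.sum_mem _ fun m hm => ?_
    rw [monomial_eq]
    refine mul_mem ?_ ?_
    · rw [← MvPolynomial.algebraMap_eq]
      exact Subalgebra.algebraMap_mem _ _
    · refine Subalgebra.prod_mem _ fun j hj => ?_
      have hx2 : (X j ^ 2 : P3) ∈ Algebra.adjoin (ZMod 2)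
          ({X 0 ^ 2, X 1 ^ 2, X 2 ^ 2} : Set P3) := by
        apply Algebra.subset_adjoin
        fin_cases j <;> simp
      have hev : m j % 2 = 0 := by
        fin_cases j
        · exact (h m hm).1
        · exact (h m hm).2.1
        · exact (h m hm).2.2
      obtain ⟨k, hk⟩ : ∃ k, m j = 2 * k := ⟨m j / 2, by omega⟩
      show (X j : P3) ^ (m j) ∈ _
      rw [hk, pow_mul]
      exact pow_mem hx2 k
  rw [A.as_sum]
  exact hs

private lemma deriv_eq3 (D : Derivation (ZMod 2) P3 P3) (e : ℕ)
    (hD : ∀ i, D (X i) = X i ^ e) (g : P3) :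
    D g = X 0 ^ e * pderiv 0 g + X 1 ^ e * pderiv 1 g + X 2 ^ e * pderiv 2 g := by
  have hEq : D = (X 0 ^ e : P3) • pderiv 0 +
      ((X 1 ^ e : P3) • pderiv 1 + (X 2 ^ e : P3) • pderiv 2) := by
    apply MvPolynomial.derivation_ext
    intro i
    fin_cases i <;>
      simp [Derivation.add_apply, Derivation.smul_apply, hD, smul_eq_mul]
  rw [hEq]
  simp [Derivation.add_apply, Derivation.smul_apply, smul_eq_mul, add_assoc]

private lemma main_aux (B C E : P3)
    (hpsB : ∀ m ∈ B.support, m 0 % 2 = 1 ∧ m 1 % 2 = 1 ∧ m 2 % 2 = 0)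
    (hpsC : ∀ m ∈ C.support, m 0 % 2 = 1 ∧ m 1 % 2 = 0 ∧ m 2 % 2 = 1)
    (hpsE : ∀ m ∈ E.support, m 0 % 2 = 0 ∧ m 1 % 2 = 1 ∧ m 2 % 2 = 1)
    (h2 : X 0 ^ 2 * pderiv 0 B + X 0 ^ 2 * pderiv 0 C + X 1 ^ 2 * pderiv 1 B
        + X 1 ^ 2 * pderiv 1 E + X 2 ^ 2 * pderiv 2 C + X 2 ^ 2 * pderiv 2 E = 0)
    (h4 : X 0 ^ 4 * pderiv 0 B + X 0 ^ 4 * pderiv 0 C + X 1 ^ 4 * pderiv 1 B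
        + X 1 ^ 4 * pderiv 1 E + X 2 ^ 4 * pderiv 2 C + X 2 ^ 4 * pderiv 2 E = 0) :
    B = 0 ∧ C = 0 ∧ E = 0 := by
  classical
  have addpure : ∀ (u v : P3) (p : (Fin 3 →₀ ℕ) → Prop),
      (∀ n ∈ u.support, p n) → (∀ n ∈ v.support, p n) → ∀ n ∈ (u + v).support, p n := by
    intro u v p hu hv n hn
    rcases Finset.mem_union.mp (MvPolynomial.support_add hn) with h | h
    exacts [hu n h, hv n h]
  -- the three parity groups, for exponent 2 and 4
  have hu2 : ∀ n ∈ (X 1 ^ 2 * pderiv 1 B + X 2 ^ 2 * pderiv 2 C : P3).support,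
      n 0 % 2 = 1 ∧ n 1 % 2 = 0 ∧ n 2 % 2 = 0 := by
    refine addpure _ _ _ (fun n hn => ?_) (fun n hn => ?_)
    · have := term_parity1 B 1 1 0 2 hpsB rfl n hn; omega
    · have := term_parity2 C 1 0 1 2 hpsC rfl n hn; omega
  have hv2 : ∀ n ∈ (X 0 ^ 2 * pderiv 0 B + X 2 ^ 2 * pderiv 2 E : P3).support,
      n 0 % 2 = 0 ∧ n 1 % 2 = 1 ∧ n 2 % 2 = 0 := by
    refine addpure _ _ _ (fun n hn => ?_) (fun n hn => ?_)
    · have := term_parity0 B 1 1 0 2 hpsB rfl n hn; omega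
    · have := term_parity2 E 0 1 1 2 hpsE rfl n hn; omega
  have hw2 : ∀ n ∈ (X 0 ^ 2 * pderiv 0 C + X 1 ^ 2 * pderiv 1 E : P3).support,
      n 0 % 2 = 0 ∧ n 1 % 2 = 0 ∧ n 2 % 2 = 1 := by
    refine addpure _ _ _ (fun n hn => ?_) (fun n hn => ?_)
    · have := term_parity0 C 1 0 1 2 hpsC rfl n hn; omega
    · have := term_parity1 E 0 1 1 2 hpsE rfl n hn; omega
  have hu4 : ∀ n ∈ (X 1 ^ 4 * pderiv 1 B + X 2 ^ 4 * pderiv 2 C : P3).support,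
      n 0 % 2 = 1 ∧ n 1 % 2 = 0 ∧ n 2 % 2 = 0 := by
    refine addpure _ _ _ (fun n hn => ?_) (fun n hn => ?_)
    · have := term_parity1 B 1 1 0 4 hpsB rfl n hn; omega
    · have := term_parity2 C 1 0 1 4 hpsC rfl n hn; omega
  have hv4 : ∀ n ∈ (X 0 ^ 4 * pderiv 0 B + X 2 ^ 4 * pderiv 2 E : P3).support,
      n 0 % 2 = 0 ∧ n 1 % 2 = 1 ∧ n 2 % 2 = 0 := by
    refine addpure _ _ _ (fun n hn => ?_) (fun n hn => ?_)
    · have := term_parity0 B 1 1 0 4 hpsB rfl n hn; omega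
    · have := term_parity2 E 0 1 1 4 hpsE rfl n hn; omega
  have hw4 : ∀ n ∈ (X 0 ^ 4 * pderiv 0 C + X 1 ^ 4 * pderiv 1 E : P3).support,
      n 0 % 2 = 0 ∧ n 1 % 2 = 0 ∧ n 2 % 2 = 1 := by
    refine addpure _ _ _ (fun n hn => ?_) (fun n hn => ?_)
    · have := term_parity0 C 1 0 1 4 hpsC rfl n hn; omega
    · have := term_parity1 E 0 1 1 4 hpsE rfl n hn; omega
  have hU2 : (X 1 ^ 2 * pderiv 1 B + X 2 ^ 2 * pderiv 2 C : P3) = 0 :=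
    sep hu2 hv2 hw2 (fun m a b => by omega) (fun m a b => by omega)
      (by linear_combination h2)
  have hV2 : (X 0 ^ 2 * pderiv 0 B + X 2 ^ 2 * pderiv 2 E : P3) = 0 :=
    sep hv2 hu2 hw2 (fun m a b => by omega) (fun m a b => by omega)
      (by linear_combination h2)
  have hU4 : (X 1 ^ 4 * pderiv 1 B + X 2 ^ 4 * pderiv 2 C : P3) = 0 :=
    sep hu4 hv4 hw4 (fun m a b => by omega) (fun m a b => by omega)
      (by linear_combination h4)
  -- turn sums into equalities (char 2)
  have e1 : (X 1 ^ 2 * pderiv 1 B : P3) = X 2 ^ 2 * pderiv 2 C :=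
    (eq_neg_of_add_eq_zero_left hU2).trans (CharTwo.neg_eq _)
  have e2 : (X 1 ^ 4 * pderiv 1 B : P3) = X 2 ^ 4 * pderiv 2 C :=
    (eq_neg_of_add_eq_zero_left hU4).trans (CharTwo.neg_eq _)
  -- derive pderiv 2 C = 0
  have hfactor : (X 2 ^ 2 * (X 1 ^ 2 - X 2 ^ 2) : P3) * pderiv 2 C = 0 := by
    linear_combination e2 - X 1 ^ 2 * e1
  have hXX : (X 1 ^ 2 - X 2 ^ 2 : P3) ≠ 0 := by
    intro hEq
    have hne : (single 2 2 : Fin 3 →₀ ℕ) ≠ single 1 2 := by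
      intro h'
      have h'' := DFunLike.congr_fun h' 1
      rw [Finsupp.single_eq_of_ne (by decide), Finsupp.single_eq_same] at h''
      exact absurd h'' (by decide)
    have hc := congrArg (coeff (single 1 2)) hEq
    rw [coeff_sub, coeff_zero, coeff_X_pow, coeff_X_pow, if_pos rfl, if_neg hne] at hc
    rw [sub_zero] at hc
    exact one_ne_zero hc
  have hX2 : (X 2 ^ 2 : P3) ≠ 0 := pow_ne_zero _ (X_ne_zero _)
  have hX1 : (X 1 ^ 2 : P3) ≠ 0 := pow_ne_zero _ (X_ne_zero _)
  have hpC2 : pderiv 2 C = 0 := by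
    rcases mul_eq_zero.mp hfactor with h | h
    · exact absurd h (mul_ne_zero hX2 hXX)
    · exact h
  have hC0 : C = 0 := eq_zero_of_pderiv_eq_zero 2 C (fun m hm => (hpsC m hm).2.2) hpC2
  have hpB1 : pderiv 1 B = 0 := by
    have : (X 1 ^ 2 : P3) * pderiv 1 B = 0 := by rw [e1, hpC2, mul_zero]
    rcases mul_eq_zero.mp this with h | h
    · exact absurd h hX1
    · exact h
  have hB0 : B = 0 := eq_zero_of_pderiv_eq_zero 1 B (fun m hm => (hpsB m hm).2.1) hpB1
  have hpE2 : pderiv 2 E = 0 := by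
    have : (X 2 ^ 2 : P3) * pderiv 2 E = 0 := by
      have := hV2
      rw [hB0, map_zero, mul_zero, zero_add] at this
      exact this
    rcases mul_eq_zero.mp this with h | h
    · exact absurd h hX2
    · exact h
  have hE0 : E = 0 := eq_zero_of_pderiv_eq_zero 2 E (fun m hm => (hpsE m hm).2.2) hpE2
  exact ⟨hB0, hC0, hE0⟩

/-- In `F₂[x, y, z]` (with `x = X 0`, `y = X 1`, `z = X 2`), every polynomial `f` all
of whose monomials have even total degree which is killed both by the Milnor
derivation `d = Q₀` (determined by `d(x) = x²`, `d(y) = y²`, `d(z) = z²`) and by the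
Milnor derivation `d₁ = Q₁` (determined by `d₁(x) = x⁴`, `d₁(y) = y⁴`, `d₁(z) = z⁴`)
lies in the subalgebra `F₂[x², y², z²]`. -/
theorem even_kernel_of_milnor_derivations
    (d d₁ : Derivation (ZMod 2) (MvPolynomial (Fin 3) (ZMod 2))
      (MvPolynomial (Fin 3) (ZMod 2)))
    (hd : ∀ i : Fin 3, d (X i) = X i ^ 2)
    (hd₁ : ∀ i : Fin 3, d₁ (X i) = X i ^ 4)
    (f : MvPolynomial (Fin 3) (ZMod 2))
    (heven : ∀ m ∈ f.support, Even (m.sum fun _ e => e))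
    (h0 : d f = 0) (h1 : d₁ f = 0) :
    f ∈ Algebra.adjoin (ZMod 2)
      ({X 0 ^ 2, X 1 ^ 2, X 2 ^ 2} : Set (MvPolynomial (Fin 3) (ZMod 2))) := by
  classical
  have hfd : f = par f 0 0 0 + par f 1 1 0 + par f 1 0 1 + par f 0 1 1 :=
    par_decomp f heven
  have hpsA := par_support f 0 0 0
  have hpsB := par_support f 1 1 0
  have hpsC := par_support f 1 0 1
  have hpsE := par_support f 0 1 1
  have hA : ∀ i : Fin 3, pderiv i (par f 0 0 0) = 0 := by
    intro i
    apply pderiv_eq_zero_of_even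
    intro m hm
    fin_cases i
    · exact (hpsA m hm).1
    · exact (hpsA m hm).2.1
    · exact (hpsA m hm).2.2
  have hB2 : pderiv 2 (par f 1 1 0) = 0 :=
    pderiv_eq_zero_of_even 2 _ (fun m hm => (hpsB m hm).2.2)
  have hC1 : pderiv 1 (par f 1 0 1) = 0 :=
    pderiv_eq_zero_of_even 1 _ (fun m hm => (hpsC m hm).2.1)
  have hE0 : pderiv 0 (par f 0 1 1) = 0 :=
    pderiv_eq_zero_of_even 0 _ (fun m hm => (hpsE m hm).1)
  have hp0 : pderiv 0 f = pderiv 0 (par f 1 1 0) + pderiv 0 (par f 1 0 1) := by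
    conv_lhs => rw [hfd]
    simp only [map_add, hA 0, hE0, zero_add, add_zero]
  have hp1 : pderiv 1 f = pderiv 1 (par f 1 1 0) + pderiv 1 (par f 0 1 1) := by
    conv_lhs => rw [hfd]
    simp only [map_add, hA 1, hC1, zero_add, add_zero]
  have hp2 : pderiv 2 f = pderiv 2 (par f 1 0 1) + pderiv 2 (par f 0 1 1) := by
    conv_lhs => rw [hfd]
    simp only [map_add, hA 2, hB2, zero_add, add_zero]
  have h2 : X 0 ^ 2 * pderiv 0 (par f 1 1 0) + X 0 ^ 2 * pderiv 0 (par f 1 0 1)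
      + X 1 ^ 2 * pderiv 1 (par f 1 1 0) + X 1 ^ 2 * pderiv 1 (par f 0 1 1)
      + X 2 ^ 2 * pderiv 2 (par f 1 0 1) + X 2 ^ 2 * pderiv 2 (par f 0 1 1) = 0 := by
    have h := deriv_eq3 d 2 hd f
    rw [h0, hp0, hp1, hp2] at h
    linear_combination h.symm
  have h4 : X 0 ^ 4 * pderiv 0 (par f 1 1 0) + X 0 ^ 4 * pderiv 0 (par f 1 0 1)
      + X 1 ^ 4 * pderiv 1 (par f 1 1 0) + X 1 ^ 4 * pderiv 1 (par f 0 1 1)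
      + X 2 ^ 4 * pderiv 2 (par f 1 0 1) + X 2 ^ 4 * pderiv 2 (par f 0 1 1) = 0 := by
    have h := deriv_eq3 d₁ 4 hd₁ f
    rw [h1, hp0, hp1, hp2] at h
    linear_combination h.symm
  obtain ⟨hB0, hC0, hE0'⟩ := main_aux _ _ _ hpsB hpsC hpsE h2 h4
  rw [hfd, hB0, hC0, hE0', add_zero, add_zero, add_zero]
  exact even_mem_adjoin _ hpsA
end

section
/- In the graded polynomial ring F₂[u, v] with |u| = |v| = 1, the ideal generated by R = u² + uv + v² is not stable under the total Steenrod operation, and the ideal generated by R and Sq¹R = u²v + uv² is the smallest Steenrod-stable ideal containing R; the quotient F₂[u, v, t]/(R, Sq¹R) with |t| = 4 has Poincaré series (1 + 2s + 2s² + s³)/(1 − s⁴). -/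
set_option synthInstance.maxHeartbeats 1000000
set_option maxHeartbeats 1000000

open MvPolynomial

/-- The total Steenrod operation on `H^*((Z/2)²; F₂) = F₂[u, v]` (with `u = X 0`,
`v = X 1`): the ring homomorphism sending each degree-one generator `x` to `x + x²`. -/
noncomputable def totalSq :
    MvPolynomial (Fin 2) (ZMod 2) →ₐ[ZMod 2] MvPolynomial (Fin 2) (ZMod 2) :=
  aeval fun i => X i + X i ^ 2

/-- The Steenrod operation `Sq^k` on `F₂[u, v]`: on a homogeneous piece of degree `d`
it is the degree `d + k` component of the total Steenrod operation. -/
noncomputable def SqOp (k : ℕ) (f : MvPolynomial (Fin 2) (ZMod 2)) :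
    MvPolynomial (Fin 2) (ZMod 2) :=
  ∑ d ∈ Finset.range (f.totalDegree + 1),
    homogeneousComponent (d + k) (totalSq (homogeneousComponent d f))

/-- The relation `R = u² + uv + v²` of the cohomology of the quaternion group `Q₈`. -/
noncomputable def Rrel : MvPolynomial (Fin 2) (ZMod 2) :=
  X 0 ^ 2 + X 0 * X 1 + X 1 ^ 2

noncomputable def Srel : MvPolynomial (Fin 2) (ZMod 2) := X 0 ^ 2 * X 1 + X 0 * X 1 ^ 2

lemma two_eq_zero2 : (2 : MvPolynomial (Fin 2) (ZMod 2)) = 0 := by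
  rw [← map_ofNat (C : ZMod 2 →+* MvPolynomial (Fin 2) (ZMod 2)) 2,
    show (2 : ZMod 2) = 0 from rfl, map_zero]

lemma htotR : totalSq Rrel = Rrel + Srel + Rrel ^ 2 := by
  simp only [totalSq, Rrel, Srel, map_add, map_mul, map_pow, aeval_X]
  linear_combination (X 0 ^ 3 + X 1 ^ 3 - X 0 ^ 3 * X 1 - X 0 ^ 2 * X 1 ^ 2 -
    X 0 * X 1 ^ 3 : MvPolynomial (Fin 2) (ZMod 2)) * two_eq_zero2

lemma htotS : totalSq Srel =
    Srel * ((1 + X 0) * (1 + X 1) * (1 + X 0 + X 1)) := by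
  simp only [totalSq, Srel, map_add, map_mul, map_pow, aeval_X]
  linear_combination (-(X 0 ^ 2 * X 1 ^ 2 * (1 + X 0) * (1 + X 1)) :
    MvPolynomial (Fin 2) (ZMod 2)) * two_eq_zero2

lemma hR_hom : Rrel.IsHomogeneous 2 := by
  rw [Rrel]
  apply MvPolynomial.IsHomogeneous.add
  apply MvPolynomial.IsHomogeneous.add
  · simpa using (isHomogeneous_X (ZMod 2) (0 : Fin 2)).pow 2
  · simpa using (isHomogeneous_X (ZMod 2) (0 : Fin 2)).mul (isHomogeneous_X (ZMod 2) 1)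
  · simpa using (isHomogeneous_X (ZMod 2) (1 : Fin 2)).pow 2

lemma hS_hom : Srel.IsHomogeneous 3 := by
  rw [Srel]
  apply MvPolynomial.IsHomogeneous.add
  · simpa using ((isHomogeneous_X (ZMod 2) (0 : Fin 2)).pow 2).mul
      (isHomogeneous_X (ZMod 2) 1)
  · simpa using (isHomogeneous_X (ZMod 2) (0 : Fin 2)).mul
      ((isHomogeneous_X (ZMod 2) (1 : Fin 2)).pow 2)

noncomputable def m2 (a b : ℕ) : Fin 2 →₀ ℕ :=
  Finsupp.single 0 a + Finsupp.single 1 b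

@[simp] lemma m2_apply0 (a b : ℕ) : m2 a b 0 = a := by simp [m2, Finsupp.single_apply]
@[simp] lemma m2_apply1 (a b : ℕ) : m2 a b 1 = b := by simp [m2, Finsupp.single_apply]

lemma m2_eq_iff {a b a' b' : ℕ} : m2 a b = m2 a' b' ↔ (a = a' ∧ b = b') := by
  constructor
  · intro h
    exact ⟨by simpa using DFunLike.congr_fun h 0, by simpa using DFunLike.congr_fun h 1⟩
  · rintro ⟨rfl, rfl⟩; rfl

lemma m2_eta (μ : Fin 2 →₀ ℕ) : μ = m2 (μ 0) (μ 1) := by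
  ext i; fin_cases i <;> simp

lemma m2_add (a b a' b' : ℕ) : m2 a b + m2 a' b' = m2 (a + a') (b + b') := by
  ext i; fin_cases i <;> simp

lemma R2_eq : Rrel = monomial (m2 2 0) 1 + monomial (m2 1 1) 1 + monomial (m2 0 2) 1 := by
  rw [Rrel, X_pow_eq_monomial, X_pow_eq_monomial,
    show (X 0 * X 1 : MvPolynomial (Fin 2) (ZMod 2)) = X 0 ^ 1 * X 1 ^ 1 by ring,
    X_pow_eq_monomial, X_pow_eq_monomial, monomial_mul]
  norm_num [m2]

lemma S2_eq : Srel = monomial (m2 2 1) 1 + monomial (m2 1 2) 1 := by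
  rw [Srel,
    show (X 0 ^ 2 * X 1 : MvPolynomial (Fin 2) (ZMod 2)) = X 0 ^ 2 * X 1 ^ 1 by ring,
    show (X 0 * X 1 ^ 2 : MvPolynomial (Fin 2) (ZMod 2)) = X 0 ^ 1 * X 1 ^ 2 by ring]
  rw [X_pow_eq_monomial, X_pow_eq_monomial, X_pow_eq_monomial, X_pow_eq_monomial,
    monomial_mul, monomial_mul]
  norm_num [m2]

lemma hR_ne : Rrel ≠ 0 := by
  intro h
  have := congrArg (coeff (m2 2 0)) h
  rw [R2_eq] at this
  simp [coeff_monomial, m2_eq_iff] at this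

lemma hR_td : Rrel.totalDegree = 2 := hR_hom.totalDegree hR_ne

lemma part1 : SqOp 1 Rrel = Srel := by
  have hmem : Rrel ∈ homogeneousSubmodule (Fin 2) (ZMod 2) 2 :=
    (mem_homogeneousSubmodule _ _).2 hR_hom
  rw [SqOp, hR_td]
  rw [Finset.sum_range_succ, Finset.sum_range_succ, Finset.sum_range_one]
  rw [homogeneousComponent_of_mem hmem, homogeneousComponent_of_mem hmem,
    homogeneousComponent_of_mem hmem]
  norm_num
  rw [htotR, map_add, map_add]
  rw [homogeneousComponent_of_mem hmem,
    homogeneousComponent_of_mem ((mem_homogeneousSubmodule _ _).2 hS_hom),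
    homogeneousComponent_of_mem ((mem_homogeneousSubmodule _ _).2 (by
      simpa using hR_hom.pow 2))]
  norm_num

lemma vanishR2 (a : MvPolynomial (Fin 2) (ZMod 2)) :
    coeff (m2 3 0) (a * Rrel) + coeff (m2 2 1) (a * Rrel) + coeff (m2 0 3) (a * Rrel)
      = 0 := by
  induction a using MvPolynomial.induction_on' with
  | add p r hp hr =>
    simp only [add_mul, coeff_add]
    linear_combination hp + hr
  | monomial μ c =>
    rw [m2_eta μ, R2_eq]
    simp only [mul_add, monomial_mul, coeff_add, coeff_monomial, mul_one, m2_add, m2_eq_iff,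
      and_false, false_and, if_false]
    split_ifs <;> first | (exfalso; omega) | (revert c; decide) | (exfalso; simp_all)

lemma part2 : Srel ∉ Ideal.span {Rrel} := by
  intro h
  obtain ⟨a, ha⟩ := Ideal.mem_span_singleton'.1 h
  have := vanishR2 a
  rw [ha, S2_eq] at this
  simp [coeff_add, coeff_monomial, m2_eq_iff] at this

lemma hRmem : Rrel ∈ Ideal.span {Rrel, Srel} := Ideal.subset_span (by simp)
lemma hSmem : Srel ∈ Ideal.span {Rrel, Srel} := Ideal.subset_span (by simp)

lemma hc_mul_mem (g : MvPolynomial (Fin 2) (ZMod 2)) (n : ℕ) (hgh : g.IsHomogeneous n)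
    (hgI : g ∈ Ideal.span {Rrel, Srel}) (a : MvPolynomial (Fin 2) (ZMod 2)) (m : ℕ) :
    homogeneousComponent m (a * g) ∈ Ideal.span {Rrel, Srel} := by
  induction a using MvPolynomial.induction_on' with
  | monomial μ c =>
    have hh : (monomial μ c * g).IsHomogeneous (μ.degree + n) :=
      (isHomogeneous_monomial c rfl).mul hgh
    rw [homogeneousComponent_of_mem ((mem_homogeneousSubmodule _ _).2 hh)]
    split_ifs
    · exact Ideal.mul_mem_left _ _ hgI
    · exact zero_mem _
  | add p q hp hq =>
    rw [add_mul, map_add]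
    exact add_mem hp hq

lemma hc_mem (f : MvPolynomial (Fin 2) (ZMod 2)) (hf : f ∈ Ideal.span {Rrel, Srel})
    (m : ℕ) : homogeneousComponent m f ∈ Ideal.span {Rrel, Srel} := by
  obtain ⟨a, b, rfl⟩ := Ideal.mem_span_pair.1 hf
  rw [map_add]
  exact add_mem (hc_mul_mem Rrel 2 hR_hom hRmem a m) (hc_mul_mem Srel 3 hS_hom hSmem b m)

lemma totalSq_mem (f : MvPolynomial (Fin 2) (ZMod 2))
    (hf : f ∈ Ideal.span {Rrel, Srel}) : totalSq f ∈ Ideal.span {Rrel, Srel} := by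
  obtain ⟨a, b, rfl⟩ := Ideal.mem_span_pair.1 hf
  rw [map_add, map_mul, map_mul, htotR, htotS]
  refine add_mem (Ideal.mul_mem_left _ _ ?_) (Ideal.mul_mem_left _ _ ?_)
  · exact add_mem (add_mem hRmem hSmem) (by rw [sq]; exact Ideal.mul_mem_right _ _ hRmem)
  · exact Ideal.mul_mem_right _ _ hSmem

lemma part3 (k : ℕ) (f : MvPolynomial (Fin 2) (ZMod 2))
    (hf : f ∈ Ideal.span {Rrel, Srel}) : SqOp k f ∈ Ideal.span {Rrel, Srel} := by
  rw [SqOp]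
  exact Ideal.sum_mem _ fun d _ =>
    hc_mem _ (totalSq_mem _ (hc_mem f hf d)) _

noncomputable def m3 (a b c : ℕ) : Fin 3 →₀ ℕ :=
  Finsupp.single 0 a + Finsupp.single 1 b + Finsupp.single 2 c

@[simp] lemma m3_apply0 (a b c : ℕ) : m3 a b c 0 = a := by
  simp [m3, Finsupp.single_apply]
@[simp] lemma m3_apply1 (a b c : ℕ) : m3 a b c 1 = b := by
  simp [m3, Finsupp.single_apply]
@[simp] lemma m3_apply2 (a b c : ℕ) : m3 a b c 2 = c := by
  simp [m3, Finsupp.single_apply]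

lemma m3_eq_iff {a b c a' b' c' : ℕ} :
    m3 a b c = m3 a' b' c' ↔ (a = a' ∧ b = b' ∧ c = c') := by
  constructor
  · intro h
    exact ⟨by simpa using DFunLike.congr_fun h 0, by simpa using DFunLike.congr_fun h 1,
      by simpa using DFunLike.congr_fun h 2⟩
  · rintro ⟨rfl, rfl, rfl⟩; rfl

lemma m3_eta (μ : Fin 3 →₀ ℕ) : μ = m3 (μ 0) (μ 1) (μ 2) := by
  ext i; fin_cases i <;> simp

lemma m3_add (a b c a' b' c' : ℕ) :
    m3 a b c + m3 a' b' c' = m3 (a + a') (b + b') (c + c') := by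
  ext i; fin_cases i <;> simp

lemma weight_m3 (a b c : ℕ) :
    Finsupp.weight (![1, 1, 4] : Fin 3 → ℕ) (m3 a b c) = a + b + 4 * c := by
  simp [m3, map_add, Finsupp.weight, Finsupp.linearCombination_single]
  ring

noncomputable def R3 : MvPolynomial (Fin 3) (ZMod 2) := X 0 ^ 2 + X 0 * X 1 + X 1 ^ 2
noncomputable def S3 : MvPolynomial (Fin 3) (ZMod 2) := X 0 ^ 2 * X 1 + X 0 * X 1 ^ 2
noncomputable def I3 : Ideal (MvPolynomial (Fin 3) (ZMod 2)) := Ideal.span {R3, S3}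

lemma two_eq_zero3 : (2 : MvPolynomial (Fin 3) (ZMod 2)) = 0 := by
  rw [← map_ofNat (C : ZMod 2 →+* MvPolynomial (Fin 3) (ZMod 2)) 2,
    show (2 : ZMod 2) = 0 from rfl, map_zero]

lemma mon_eq (a b c : ℕ) :
    (monomial (m3 a b c) 1 : MvPolynomial (Fin 3) (ZMod 2)) = X 0 ^ a * X 1 ^ b * X 2 ^ c := by
  rw [X_pow_eq_monomial, X_pow_eq_monomial, X_pow_eq_monomial, monomial_mul, monomial_mul]
  norm_num [m3]

lemma R3_eq : R3 = monomial (m3 2 0 0) 1 + monomial (m3 1 1 0) 1 + monomial (m3 0 2 0) 1 := by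
  rw [mon_eq, mon_eq, mon_eq, R3]; ring

lemma S3_eq : S3 = monomial (m3 2 1 0) 1 + monomial (m3 1 2 0) 1 := by
  rw [mon_eq, mon_eq, S3]; ring

lemma v00R (q : ℕ) (a : MvPolynomial (Fin 3) (ZMod 2)) :
    coeff (m3 0 0 q) (a * R3) = 0 := by
  induction a using MvPolynomial.induction_on' with
  | add p r hp hr =>
    simp only [add_mul, coeff_add]
    linear_combination hp + hr
  | monomial μ c =>
    rw [m3_eta μ, R3_eq]
    simp only [mul_add, monomial_mul, coeff_add, coeff_monomial, mul_one, m3_add, m3_eq_iff]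
    split_ifs <;> first | (exfalso; omega) | (revert c; decide) | (exfalso; simp_all)

lemma v00S (q : ℕ) (a : MvPolynomial (Fin 3) (ZMod 2)) :
    coeff (m3 0 0 q) (a * S3) = 0 := by
  induction a using MvPolynomial.induction_on' with
  | add p r hp hr =>
    simp only [add_mul, coeff_add]
    linear_combination hp + hr
  | monomial μ c =>
    rw [m3_eta μ, S3_eq]
    simp only [mul_add, monomial_mul, coeff_add, coeff_monomial, mul_one, m3_add, m3_eq_iff]
    split_ifs <;> first | (exfalso; omega) | (revert c; decide) | (exfalso; simp_all)

lemma v10R (q : ℕ) (a : MvPolynomial (Fin 3) (ZMod 2)) :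
    coeff (m3 1 0 q) (a * R3) = 0 := by
  induction a using MvPolynomial.induction_on' with
  | add p r hp hr =>
    simp only [add_mul, coeff_add]
    linear_combination hp + hr
  | monomial μ c =>
    rw [m3_eta μ, R3_eq]
    simp only [mul_add, monomial_mul, coeff_add, coeff_monomial, mul_one, m3_add, m3_eq_iff]
    split_ifs <;> first | (exfalso; omega) | (revert c; decide) | (exfalso; simp_all)

lemma v10S (q : ℕ) (a : MvPolynomial (Fin 3) (ZMod 2)) :
    coeff (m3 1 0 q) (a * S3) = 0 := by
  induction a using MvPolynomial.induction_on' with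
  | add p r hp hr =>
    simp only [add_mul, coeff_add]
    linear_combination hp + hr
  | monomial μ c =>
    rw [m3_eta μ, S3_eq]
    simp only [mul_add, monomial_mul, coeff_add, coeff_monomial, mul_one, m3_add, m3_eq_iff]
    split_ifs <;> first | (exfalso; omega) | (revert c; decide) | (exfalso; simp_all)

lemma v01R (q : ℕ) (a : MvPolynomial (Fin 3) (ZMod 2)) :
    coeff (m3 0 1 q) (a * R3) = 0 := by
  induction a using MvPolynomial.induction_on' with
  | add p r hp hr =>
    simp only [add_mul, coeff_add]
    linear_combination hp + hr
  | monomial μ c =>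
    rw [m3_eta μ, R3_eq]
    simp only [mul_add, monomial_mul, coeff_add, coeff_monomial, mul_one, m3_add, m3_eq_iff]
    split_ifs <;> first | (exfalso; omega) | (revert c; decide) | (exfalso; simp_all)

lemma v01S (q : ℕ) (a : MvPolynomial (Fin 3) (ZMod 2)) :
    coeff (m3 0 1 q) (a * S3) = 0 := by
  induction a using MvPolynomial.induction_on' with
  | add p r hp hr =>
    simp only [add_mul, coeff_add]
    linear_combination hp + hr
  | monomial μ c =>
    rw [m3_eta μ, S3_eq]
    simp only [mul_add, monomial_mul, coeff_add, coeff_monomial, mul_one, m3_add, m3_eq_iff]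
    split_ifs <;> first | (exfalso; omega) | (revert c; decide) | (exfalso; simp_all)

lemma vAR (q : ℕ) (a : MvPolynomial (Fin 3) (ZMod 2)) :
    coeff (m3 1 1 q) (a * R3) + coeff (m3 2 0 q) (a * R3) = 0 := by
  induction a using MvPolynomial.induction_on' with
  | add p r hp hr =>
    simp only [add_mul, coeff_add]
    linear_combination hp + hr
  | monomial μ c =>
    rw [m3_eta μ, R3_eq]
    simp only [mul_add, monomial_mul, coeff_add, coeff_monomial, mul_one, m3_add, m3_eq_iff]
    split_ifs <;> first | (exfalso; omega) | (revert c; decide) | (exfalso; simp_all)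

lemma vAS (q : ℕ) (a : MvPolynomial (Fin 3) (ZMod 2)) :
    coeff (m3 1 1 q) (a * S3) + coeff (m3 2 0 q) (a * S3) = 0 := by
  induction a using MvPolynomial.induction_on' with
  | add p r hp hr =>
    simp only [add_mul, coeff_add]
    linear_combination hp + hr
  | monomial μ c =>
    rw [m3_eta μ, S3_eq]
    simp only [mul_add, monomial_mul, coeff_add, coeff_monomial, mul_one, m3_add, m3_eq_iff]
    split_ifs <;> first | (exfalso; omega) | (revert c; decide) | (exfalso; simp_all)

lemma vBR (q : ℕ) (a : MvPolynomial (Fin 3) (ZMod 2)) :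
    coeff (m3 0 2 q) (a * R3) + coeff (m3 2 0 q) (a * R3) = 0 := by
  induction a using MvPolynomial.induction_on' with
  | add p r hp hr =>
    simp only [add_mul, coeff_add]
    linear_combination hp + hr
  | monomial μ c =>
    rw [m3_eta μ, R3_eq]
    simp only [mul_add, monomial_mul, coeff_add, coeff_monomial, mul_one, m3_add, m3_eq_iff]
    split_ifs <;> first | (exfalso; omega) | (revert c; decide) | (exfalso; simp_all)

lemma vBS (q : ℕ) (a : MvPolynomial (Fin 3) (ZMod 2)) :
    coeff (m3 0 2 q) (a * S3) + coeff (m3 2 0 q) (a * S3) = 0 := by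
  induction a using MvPolynomial.induction_on' with
  | add p r hp hr =>
    simp only [add_mul, coeff_add]
    linear_combination hp + hr
  | monomial μ c =>
    rw [m3_eta μ, S3_eq]
    simp only [mul_add, monomial_mul, coeff_add, coeff_monomial, mul_one, m3_add, m3_eq_iff]
    split_ifs <;> first | (exfalso; omega) | (revert c; decide) | (exfalso; simp_all)

lemma v3R (q : ℕ) (a : MvPolynomial (Fin 3) (ZMod 2)) :
    coeff (m3 2 1 q) (a * R3) + coeff (m3 1 2 q) (a * R3) = 0 := by
  induction a using MvPolynomial.induction_on' with
  | add p r hp hr =>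
    simp only [add_mul, coeff_add]
    linear_combination hp + hr
  | monomial μ c =>
    rw [m3_eta μ, R3_eq]
    simp only [mul_add, monomial_mul, coeff_add, coeff_monomial, mul_one, m3_add, m3_eq_iff]
    split_ifs <;> first | (exfalso; omega) | (revert c; decide) | (exfalso; simp_all)

lemma v3S (q : ℕ) (a : MvPolynomial (Fin 3) (ZMod 2)) :
    coeff (m3 2 1 q) (a * S3) + coeff (m3 1 2 q) (a * S3) = 0 := by
  induction a using MvPolynomial.induction_on' with
  | add p r hp hr =>
    simp only [add_mul, coeff_add]
    linear_combination hp + hr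
  | monomial μ c =>
    rw [m3_eta μ, S3_eq]
    simp only [mul_add, monomial_mul, coeff_add, coeff_monomial, mul_one, m3_add, m3_eq_iff]
    split_ifs <;> first | (exfalso; omega) | (revert c; decide) | (exfalso; simp_all)

lemma R3mem : R3 ∈ I3 := Ideal.subset_span (by simp)
lemma S3mem : S3 ∈ I3 := Ideal.subset_span (by simp)

lemma u3_mem : (X 0 ^ 3 : MvPolynomial (Fin 3) (ZMod 2)) ∈ I3 := by
  have h : (X 0 ^ 3 : MvPolynomial (Fin 3) (ZMod 2)) = X 0 * R3 + S3 := by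
    rw [R3, S3]
    linear_combination (-(X 0 ^ 2 * X 1 + X 0 * X 1 ^ 2) :
      MvPolynomial (Fin 3) (ZMod 2)) * two_eq_zero3
  rw [h]; exact add_mem (Ideal.mul_mem_left _ _ R3mem) S3mem

lemma v3_mem : (X 1 ^ 3 : MvPolynomial (Fin 3) (ZMod 2)) ∈ I3 := by
  have h : (X 1 ^ 3 : MvPolynomial (Fin 3) (ZMod 2)) = X 1 * R3 + S3 := by
    rw [R3, S3]
    linear_combination (-(X 0 ^ 2 * X 1 + X 0 * X 1 ^ 2) :
      MvPolynomial (Fin 3) (ZMod 2)) * two_eq_zero3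
  rw [h]; exact add_mem (Ideal.mul_mem_left _ _ R3mem) S3mem

lemma mon22_mem (c : ℕ) : (monomial (m3 2 2 c) 1 : MvPolynomial (Fin 3) (ZMod 2)) ∈ I3 := by
  have h : (monomial (m3 2 2 c) 1 : MvPolynomial (Fin 3) (ZMod 2)) =
      (monomial (m3 1 0 c) 1 + monomial (m3 0 1 c) 1) * S3 + monomial (m3 1 1 c) 1 * R3 := by
    rw [mon_eq, mon_eq, mon_eq, mon_eq, R3, S3]
    linear_combination (-(X 0 ^ 3 * X 1 + X 0 ^ 2 * X 1 ^ 2 + X 0 * X 1 ^ 3) * X 2 ^ c :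
      MvPolynomial (Fin 3) (ZMod 2)) * two_eq_zero3
  rw [h]; exact add_mem (Ideal.mul_mem_left _ _ S3mem) (Ideal.mul_mem_left _ _ R3mem)

lemma id_u2 (c : ℕ) : (monomial (m3 2 0 c) 1 : MvPolynomial (Fin 3) (ZMod 2)) =
    monomial (m3 1 1 c) 1 + monomial (m3 0 2 c) 1 + monomial (m3 0 0 c) 1 * R3 := by
  rw [mon_eq, mon_eq, mon_eq, mon_eq, R3]
  linear_combination (-(X 0 * X 1 + X 1 ^ 2) * X 2 ^ c :
    MvPolynomial (Fin 3) (ZMod 2)) * two_eq_zero3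

lemma id_u2v (c : ℕ) : (monomial (m3 2 1 c) 1 : MvPolynomial (Fin 3) (ZMod 2)) =
    monomial (m3 1 2 c) 1 + monomial (m3 0 0 c) 1 * S3 := by
  rw [mon_eq, mon_eq, mon_eq, S3]
  linear_combination (-(X 0 * X 1 ^ 2) * X 2 ^ c :
    MvPolynomial (Fin 3) (ZMod 2)) * two_eq_zero3

lemma split_a {a : ℕ} (b c : ℕ) (ha : 3 ≤ a) :
    (monomial (m3 a b c) 1 : MvPolynomial (Fin 3) (ZMod 2)) =
      X 0 ^ 3 * monomial (m3 (a - 3) b c) 1 := by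
  rw [mon_eq, mon_eq, show a = 3 + (a - 3) by omega, pow_add]
  ring_nf
  rw [show 3 + (a - 3) - 3 = a - 3 by omega]

lemma split_b {b : ℕ} (a c : ℕ) (hb : 3 ≤ b) :
    (monomial (m3 a b c) 1 : MvPolynomial (Fin 3) (ZMod 2)) =
      X 1 ^ 3 * monomial (m3 a (b - 3) c) 1 := by
  rw [mon_eq, mon_eq, show b = 3 + (b - 3) by omega, pow_add]
  ring_nf
  rw [show 3 + (b - 3) - 3 = b - 3 by omega]

lemma phi_zero {f : MvPolynomial (Fin 3) (ZMod 2)} (hf : f ∈ I3) :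
    (Ideal.Quotient.mkₐ (ZMod 2) I3) f = 0 := by
  rw [Ideal.Quotient.mkₐ_eq_mk]
  exact (Ideal.Quotient.eq_zero_iff_mem).2 hf

lemma phi_zero' {f : MvPolynomial (Fin 3) (ZMod 2)}
    (hf : (Ideal.Quotient.mkₐ (ZMod 2) I3) f = 0) : f ∈ I3 := by
  rw [Ideal.Quotient.mkₐ_eq_mk] at hf
  exact (Ideal.Quotient.eq_zero_iff_mem).1 hf

lemma map_le_span (n : ℕ) (B : Set (MvPolynomial (Fin 3) (ZMod 2) ⧸ I3))
    (hsmall : ∀ a b c : ℕ, a ≤ 2 → b ≤ 2 → a + b + 4 * c = n →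
      (Ideal.Quotient.mkₐ (ZMod 2) I3) (monomial (m3 a b c) 1) ∈ Submodule.span (ZMod 2) B) :
    Submodule.map (Ideal.Quotient.mkₐ (ZMod 2) I3).toLinearMap
      (weightedHomogeneousSubmodule (ZMod 2) (![1, 1, 4] : Fin 3 → ℕ) n) ≤
      Submodule.span (ZMod 2) B := by
  rintro x ⟨f, hf, rfl⟩
  simp only [AlgHom.toLinearMap_apply]
  rw [← support_sum_monomial_coeff f, map_sum]
  apply Submodule.sum_mem
  intro μ hμ
  have hw : (Finsupp.weight (![1, 1, 4] : Fin 3 → ℕ)) μ = n :=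
    hf (mem_support_iff.1 hμ)
  have hw' : μ 0 + μ 1 + 4 * μ 2 = n := by
    rw [m3_eta μ, weight_m3] at hw; exact hw
  have hmono : (monomial μ (coeff μ f) : MvPolynomial (Fin 3) (ZMod 2)) =
      coeff μ f • monomial μ 1 := by rw [smul_monomial, smul_eq_mul, mul_one]
  rw [hmono, map_smul]
  apply Submodule.smul_mem
  rw [m3_eta μ]
  by_cases h3a : 3 ≤ μ 0
  · rw [split_a _ _ h3a, phi_zero (Ideal.mul_mem_right _ _ u3_mem)]
    exact zero_mem _
  by_cases h3b : 3 ≤ μ 1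
  · rw [split_b _ _ h3b, phi_zero (Ideal.mul_mem_right _ _ v3_mem)]
    exact zero_mem _
  exact hsmall _ _ _ (by omega) (by omega) hw'

lemma gen_mem_map (n a b c : ℕ) (h : a + b + 4 * c = n) :
    (Ideal.Quotient.mkₐ (ZMod 2) I3) (monomial (m3 a b c) 1) ∈
      Submodule.map (Ideal.Quotient.mkₐ (ZMod 2) I3).toLinearMap
        (weightedHomogeneousSubmodule (ZMod 2) (![1, 1, 4] : Fin 3 → ℕ) n) := by
  refine ⟨monomial (m3 a b c) 1, ?_, rfl⟩
  exact (mem_weightedHomogeneousSubmodule _ _ _ _).mpr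
    (isWeightedHomogeneous_monomial _ _ _ (by rw [weight_m3]; exact h))

lemma part5 (n : ℕ) :
    Module.finrank (ZMod 2)
      (Submodule.map (Ideal.Quotient.mkₐ (ZMod 2) I3).toLinearMap
        (weightedHomogeneousSubmodule (ZMod 2) (![1, 1, 4] : Fin 3 → ℕ) n)) =
      if n % 4 = 0 ∨ n % 4 = 3 then 1 else 2 := by
  have h4 : n % 4 = 0 ∨ n % 4 = 1 ∨ n % 4 = 2 ∨ n % 4 = 3 := by omega
  rcases h4 with hn | hn | hn | hn
  · -- r = 0 : basis t^q
    have hspan : Submodule.map (Ideal.Quotient.mkₐ (ZMod 2) I3).toLinearMap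
        (weightedHomogeneousSubmodule (ZMod 2) (![1, 1, 4] : Fin 3 → ℕ) n) =
        Submodule.span (ZMod 2)
          {(Ideal.Quotient.mkₐ (ZMod 2) I3) (monomial (m3 0 0 (n / 4)) 1)} := by
      apply le_antisymm
      · apply map_le_span
        intro a b c ha hb habc
        interval_cases a <;> interval_cases b <;>
          first
            | (exfalso; omega)
            | (rw [phi_zero (mon22_mem c)]; exact zero_mem _)
            | (obtain rfl : c = n / 4 := by omega
               exact Submodule.mem_span_singleton_self _)
      · rw [Submodule.span_le, Set.singleton_subset_iff]
        exact gen_mem_map n 0 0 (n / 4) (by omega)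
    rw [hspan, if_pos (Or.inl hn)]
    apply finrank_span_singleton
    intro h0
    have hmem := phi_zero' h0
    rw [I3] at hmem
    obtain ⟨a, b, hab⟩ := Ideal.mem_span_pair.1 hmem
    have h3 := congrArg (coeff (m3 0 0 (n / 4))) hab
    rw [coeff_add, v00R (n / 4) a, v00S (n / 4) b] at h3
    simp [coeff_monomial] at h3
  · -- r = 1 : basis u t^q, v t^q
    have hspan : Submodule.map (Ideal.Quotient.mkₐ (ZMod 2) I3).toLinearMap
        (weightedHomogeneousSubmodule (ZMod 2) (![1, 1, 4] : Fin 3 → ℕ) n) =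
        Submodule.span (ZMod 2) (Set.range
          ![(Ideal.Quotient.mkₐ (ZMod 2) I3) (monomial (m3 1 0 (n / 4)) 1),
            (Ideal.Quotient.mkₐ (ZMod 2) I3) (monomial (m3 0 1 (n / 4)) 1)]) := by
      apply le_antisymm
      · apply map_le_span
        intro a b c ha hb habc
        interval_cases a <;> interval_cases b <;>
          first
            | (exfalso; omega)
            | (obtain rfl : c = n / 4 := by omega
               exact Submodule.subset_span ⟨0, rfl⟩)
            | (obtain rfl : c = n / 4 := by omega
               exact Submodule.subset_span ⟨1, rfl⟩)
      · rw [Submodule.span_le]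
        rintro _ ⟨i, rfl⟩
        fin_cases i
        · exact gen_mem_map n 1 0 (n / 4) (by omega)
        · exact gen_mem_map n 0 1 (n / 4) (by omega)
    have li : LinearIndependent (ZMod 2)
        ![(Ideal.Quotient.mkₐ (ZMod 2) I3) (monomial (m3 1 0 (n / 4)) 1),
          (Ideal.Quotient.mkₐ (ZMod 2) I3) (monomial (m3 0 1 (n / 4)) 1)] := by
      apply LinearIndependent.pair_iff.mpr
      intro s t hst
      have h0 : (Ideal.Quotient.mkₐ (ZMod 2) I3)
          (s • monomial (m3 1 0 (n / 4)) 1 + t • monomial (m3 0 1 (n / 4)) 1) = 0 := by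
        rw [map_add, map_smul, map_smul]; exact hst
      have hmem := phi_zero' h0
      rw [I3] at hmem
      obtain ⟨a, b, hab⟩ := Ideal.mem_span_pair.1 hmem
      constructor
      · have h3 := congrArg (coeff (m3 1 0 (n / 4))) hab
        rw [coeff_add, v10R (n / 4) a, v10S (n / 4) b] at h3
        simpa [coeff_add, coeff_smul, coeff_monomial, m3_eq_iff] using h3.symm
      · have h3 := congrArg (coeff (m3 0 1 (n / 4))) hab
        rw [coeff_add, v01R (n / 4) a, v01S (n / 4) b] at h3
        simpa [coeff_add, coeff_smul, coeff_monomial, m3_eq_iff] using h3.symm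
    rw [hspan, finrank_span_eq_card li, if_neg (by omega)]
    simp
  · -- r = 2 : basis uv t^q, v² t^q
    have hspan : Submodule.map (Ideal.Quotient.mkₐ (ZMod 2) I3).toLinearMap
        (weightedHomogeneousSubmodule (ZMod 2) (![1, 1, 4] : Fin 3 → ℕ) n) =
        Submodule.span (ZMod 2) (Set.range
          ![(Ideal.Quotient.mkₐ (ZMod 2) I3) (monomial (m3 1 1 (n / 4)) 1),
            (Ideal.Quotient.mkₐ (ZMod 2) I3) (monomial (m3 0 2 (n / 4)) 1)]) := by
      apply le_antisymm
      · apply map_le_span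
        intro a b c ha hb habc
        interval_cases a <;> interval_cases b <;>
          first
            | (exfalso; omega)
            | (obtain rfl : c = n / 4 := by omega
               exact Submodule.subset_span ⟨0, rfl⟩)
            | (obtain rfl : c = n / 4 := by omega
               exact Submodule.subset_span ⟨1, rfl⟩)
            | (obtain rfl : c = n / 4 := by omega
               rw [id_u2, map_add, map_add, phi_zero (Ideal.mul_mem_left _ _ R3mem),
                 add_zero]
               exact add_mem (Submodule.subset_span ⟨0, rfl⟩)
                 (Submodule.subset_span ⟨1, rfl⟩))
      · rw [Submodule.span_le]
        rintro _ ⟨i, rfl⟩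
        fin_cases i
        · exact gen_mem_map n 1 1 (n / 4) (by omega)
        · exact gen_mem_map n 0 2 (n / 4) (by omega)
    have li : LinearIndependent (ZMod 2)
        ![(Ideal.Quotient.mkₐ (ZMod 2) I3) (monomial (m3 1 1 (n / 4)) 1),
          (Ideal.Quotient.mkₐ (ZMod 2) I3) (monomial (m3 0 2 (n / 4)) 1)] := by
      apply LinearIndependent.pair_iff.mpr
      intro s t hst
      have h0 : (Ideal.Quotient.mkₐ (ZMod 2) I3)
          (s • monomial (m3 1 1 (n / 4)) 1 + t • monomial (m3 0 2 (n / 4)) 1) = 0 := by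
        rw [map_add, map_smul, map_smul]; exact hst
      have hmem := phi_zero' h0
      rw [I3] at hmem
      obtain ⟨a, b, hab⟩ := Ideal.mem_span_pair.1 hmem
      have h4 := vAR (n / 4) a
      have h5 := vAS (n / 4) b
      have h4' := vBR (n / 4) a
      have h5' := vBS (n / 4) b
      constructor
      · have h3 := congrArg
          (fun f => coeff (m3 1 1 (n / 4)) f + coeff (m3 2 0 (n / 4)) f) hab
        simp only [coeff_add, coeff_smul, coeff_monomial, m3_eq_iff, smul_eq_mul] at h3
        simp at h3
        linear_combination h4 + h5 - h3
      · have h3 := congrArg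
          (fun f => coeff (m3 0 2 (n / 4)) f + coeff (m3 2 0 (n / 4)) f) hab
        simp only [coeff_add, coeff_smul, coeff_monomial, m3_eq_iff, smul_eq_mul] at h3
        simp at h3
        linear_combination h4' + h5' - h3
    rw [hspan, finrank_span_eq_card li, if_neg (by omega)]
    simp
  · -- r = 3 : basis uv² t^q
    have hspan : Submodule.map (Ideal.Quotient.mkₐ (ZMod 2) I3).toLinearMap
        (weightedHomogeneousSubmodule (ZMod 2) (![1, 1, 4] : Fin 3 → ℕ) n) =
        Submodule.span (ZMod 2)
          {(Ideal.Quotient.mkₐ (ZMod 2) I3) (monomial (m3 1 2 (n / 4)) 1)} := by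
      apply le_antisymm
      · apply map_le_span
        intro a b c ha hb habc
        interval_cases a <;> interval_cases b <;>
          first
            | (exfalso; omega)
            | (obtain rfl : c = n / 4 := by omega
               exact Submodule.mem_span_singleton_self _)
            | (obtain rfl : c = n / 4 := by omega
               rw [id_u2v, map_add, phi_zero (Ideal.mul_mem_left _ _ S3mem), add_zero]
               exact Submodule.mem_span_singleton_self _)
      · rw [Submodule.span_le, Set.singleton_subset_iff]
        exact gen_mem_map n 1 2 (n / 4) (by omega)
    rw [hspan, if_pos (Or.inr hn)]
    apply finrank_span_singleton
    intro h0
    have hmem := phi_zero' h0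
    rw [I3] at hmem
    obtain ⟨a, b, hab⟩ := Ideal.mem_span_pair.1 hmem
    have h4 := v3R (n / 4) a
    have h5 := v3S (n / 4) b
    have h3 := congrArg
      (fun f => coeff (m3 2 1 (n / 4)) f + coeff (m3 1 2 (n / 4)) f) hab
    simp only [coeff_add, coeff_monomial, m3_eq_iff] at h3
    simp at h3
    have : (1 : ZMod 2) = 0 := by linear_combination h4 + h5 - h3
    exact absurd this (by decide)

/-- In `F₂[u, v]` with `R = u² + uv + v²`:
(i) `Sq¹R = u²v + uv²` and it does not lie in the ideal `(R)`, so `(R)` is not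
Steenrod-stable; (ii) the ideal `(R, Sq¹R)` is stable under all Steenrod operations
`Sq^k`, and it is the smallest Steenrod-stable ideal containing `R`;
(iii) the quotient `F₂[u, v, t]/(R, Sq¹R)` with `|u| = |v| = 1`, `|t| = 4` has
Poincaré series `(1 + 2s + 2s² + s³)/(1 − s⁴)`, i.e. its weighted-degree-`n` part has
dimension `1` when `n ≡ 0, 3 (mod 4)` and `2` otherwise. -/
theorem steenrod_closure_of_quaternion_relation :
    SqOp 1 Rrel = X 0 ^ 2 * X 1 + X 0 * X 1 ^ 2 ∧
    SqOp 1 Rrel ∉ Ideal.span {Rrel} ∧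
    (∀ k : ℕ, ∀ f ∈ Ideal.span {Rrel, SqOp 1 Rrel},
      SqOp k f ∈ Ideal.span {Rrel, SqOp 1 Rrel}) ∧
    (∀ J : Ideal (MvPolynomial (Fin 2) (ZMod 2)), Rrel ∈ J →
      (∀ k : ℕ, ∀ f ∈ J, SqOp k f ∈ J) → Ideal.span {Rrel, SqOp 1 Rrel} ≤ J) ∧
    (∀ n : ℕ,
      Module.finrank (ZMod 2)
        (Submodule.map
          (Ideal.Quotient.mkₐ (ZMod 2)
            (Ideal.span {(X 0 ^ 2 + X 0 * X 1 + X 1 ^ 2 :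
                MvPolynomial (Fin 3) (ZMod 2)),
              X 0 ^ 2 * X 1 + X 0 * X 1 ^ 2})).toLinearMap
          (weightedHomogeneousSubmodule (ZMod 2) (![1, 1, 4] : Fin 3 → ℕ) n)) =
        if n % 4 = 0 ∨ n % 4 = 3 then 1 else 2) := by
  refine ⟨part1, ?_, ?_, ?_, fun n => part5 n⟩
  · rw [part1]; exact part2
  · simp only [part1]; exact part3
  · intro J hRJ hst
    simp only [part1]
    rw [Ideal.span_le]
    rintro x hx
    simp only [Set.mem_insert_iff, Set.mem_singleton_iff] at hx
    rcases hx with rfl | rfl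
    · exact hRJ
    · rw [← part1]; exact hst 1 Rrel hRJ
end

section
/- Let P : k[X₁,…,Xₙ] → R be a surjective algebra map and suppose X₁, …, X_m do not occur in some generating set of ker P. Then, writing xᵢ = P(Xᵢ) and S = R/(x₁, …, x_m), there is an algebra isomorphism R ≅ S[x₁, …, x_m], i.e. R is a polynomial ring over S in the images of the polynomial variables. -/
open MvPolynomial

def splitEquiv (n m : ℕ) (hmn : m ≤ n) :
    (Fin m ⊕ {i : Fin n | m ≤ (i : ℕ)}) ≃ Fin n where
  toFun := Sum.elim (Fin.castLE hmn) Subtype.val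
  invFun j := if h : (j : ℕ) < m then Sum.inl ⟨(j : ℕ), h⟩ else Sum.inr ⟨j, not_lt.1 h⟩
  left_inv := by
    rintro (i | ⟨j, hj⟩)
    · simp
    · have hj' : m ≤ (j : ℕ) := hj
      simp [not_lt.2 hj']
  right_inv j := by
    by_cases h : (j : ℕ) < m
    · simp [h, Fin.ext_iff]
    · simp [h]

@[simp] lemma splitEquiv_inl (n m : ℕ) (hmn : m ≤ n) (i : Fin m) :
    splitEquiv n m hmn (Sum.inl i) = Fin.castLE hmn i := rfl

@[simp] lemma splitEquiv_inr (n m : ℕ) (hmn : m ≤ n) (s : {i : Fin n | m ≤ (i : ℕ)}) :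
    splitEquiv n m hmn (Sum.inr s) = s.val := rfl

noncomputable def splitAlgEquiv (k : Type*) [CommSemiring k] (n m : ℕ) (hmn : m ≤ n) :
    MvPolynomial (Fin n) k ≃ₐ[k]
      MvPolynomial (Fin m) (MvPolynomial {i : Fin n | m ≤ (i : ℕ)} k) :=
  (renameEquiv k (splitEquiv n m hmn).symm).trans
    (sumAlgEquiv k (Fin m) {i : Fin n | m ≤ (i : ℕ)})

lemma splitAlgEquiv_rename (k : Type*) [CommSemiring k] (n m : ℕ) (hmn : m ≤ n)
    (q : MvPolynomial {i : Fin n | m ≤ (i : ℕ)} k) :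
    splitAlgEquiv k n m hmn (rename Subtype.val q) = C q := by
  have h1 : (splitEquiv n m hmn).symm ∘ (Subtype.val : {i : Fin n | m ≤ (i : ℕ)} → Fin n)
      = Sum.inr := by
    funext s
    exact (Equiv.symm_apply_eq _).2 rfl
  have h2 := AlgHom.congr_fun
    (sumAlgEquiv_comp_rename_inr (R := k) (S₁ := Fin m)
      (S₂ := {i : Fin n | m ≤ (i : ℕ)})) q
  simp only [AlgHom.coe_comp, Function.comp_apply, AlgEquiv.toAlgHom_eq_coe,
    AlgHom.coe_coe, IsScalarTower.coe_toAlgHom'] at h2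
  calc splitAlgEquiv k n m hmn (rename Subtype.val q)
      = sumAlgEquiv k (Fin m) {i : Fin n | m ≤ (i : ℕ)}
        (rename (splitEquiv n m hmn).symm (rename Subtype.val q)) := rfl
    _ = sumAlgEquiv k (Fin m) {i : Fin n | m ≤ (i : ℕ)} (rename Sum.inr q) := by
        rw [rename_rename, h1]
    _ = C q := h2

lemma splitAlgEquiv_X (k : Type*) [CommSemiring k] (n m : ℕ) (hmn : m ≤ n) (i : Fin m) :
    splitAlgEquiv k n m hmn (X (Fin.castLE hmn i)) = X i := by
  have : (Fin.castLE hmn i) = splitEquiv n m hmn (Sum.inl i) := rfl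
  rw [this]
  calc splitAlgEquiv k n m hmn (X (splitEquiv n m hmn (Sum.inl i)))
      = sumAlgEquiv k (Fin m) {i : Fin n | m ≤ (i : ℕ)}
        (rename (splitEquiv n m hmn).symm (X (splitEquiv n m hmn (Sum.inl i)))) := rfl
    _ = X i := by rw [rename_X, Equiv.symm_apply_apply]; simp

/-- Let `P : k[X₀, …, X_{n-1}] → R` be a surjective presentation of a commutative
`k`-algebra whose kernel is generated by polynomials in which the first `m`
variables `X₀, …, X_{m-1}` do not occur.  Writing `xᵢ = P(Xᵢ)` and
`S = R/(x₀, …, x_{m-1})`, the ring `R` is a polynomial ring over `S` in `m`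
variables: `R ≅ S[x₀, …, x_{m-1}]`. -/
theorem polynomial_variables_split (k R : Type*) [Field k] [CommRing R] [Algebra k R]
    (n m : ℕ) (hmn : m ≤ n)
    (P : MvPolynomial (Fin n) k →ₐ[k] R) (hsurj : Function.Surjective P)
    (S : Set (MvPolynomial (Fin n) k)) (hker : RingHom.ker P.toRingHom = Ideal.span S)
    (hvars : ∀ p ∈ S, p ∈ MvPolynomial.supported k {i : Fin n | m ≤ (i : ℕ)}) :
    Nonempty (R ≃ₐ[k] MvPolynomial (Fin m)
      (R ⧸ Ideal.span (Set.range fun i : Fin m => P (X (Fin.castLE hmn i))))) := by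
  classical
  set σ₂ := {i : Fin n | m ≤ (i : ℕ)} with hσ₂
  set B := MvPolynomial σ₂ k with hB
  set Φ := splitAlgEquiv k n m hmn with hΦ
  set I : Ideal R := Ideal.span (Set.range fun i : Fin m => P (X (Fin.castLE hmn i))) with hI
  set S' : Set B := {q : B | rename (Subtype.val : σ₂ → Fin n) q ∈ S} with hS'
  set J : Ideal B := Ideal.span S' with hJ
  -- every element of S is a rename of an element of S'
  have hSmem : ∀ p ∈ S, ∃ q ∈ S', rename (Subtype.val : σ₂ → Fin n) q = p := by
    intro p hp
    have := hvars p hp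
    rw [supported_eq_range_rename] at this
    obtain ⟨q, hq⟩ := this
    exact ⟨q, show rename Subtype.val q ∈ S from hq ▸ hp, hq⟩
  -- image of S under Φ
  have himg : ⇑(Φ : MvPolynomial (Fin n) k →+* MvPolynomial (Fin m) B) '' S = ⇑(C : B →+* MvPolynomial (Fin m) B) '' S' := by
    apply Set.Subset.antisymm
    · rintro _ ⟨p, hp, rfl⟩
      obtain ⟨q, hq, rfl⟩ := hSmem p hp
      exact ⟨q, hq, (splitAlgEquiv_rename k n m hmn q).symm⟩
    · rintro _ ⟨q, hq, rfl⟩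
      exact ⟨rename Subtype.val q, hq, splitAlgEquiv_rename k n m hmn q⟩
  -- map of the kernel
  have hmapker : Ideal.map (Φ : MvPolynomial (Fin n) k →+* MvPolynomial (Fin m) B)
      (RingHom.ker P.toRingHom) = Ideal.map (C : B →+* MvPolynomial (Fin m) B) J := by
    rw [hker, hJ, Ideal.map_span, Ideal.map_span, himg]
  -- the map g : B → R/I
  set g : B →ₐ[k] R ⧸ I :=
    (Ideal.Quotient.mkₐ k I).comp (P.comp (rename (Subtype.val : σ₂ → Fin n))) with hg
  have hgapp : ∀ q : B, g q = Ideal.Quotient.mk I (P (rename Subtype.val q)) := fun q => rfl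
  -- surjectivity of g
  have hgsurj : Function.Surjective g := by
    rw [← AlgHom.range_eq_top]
    set h : MvPolynomial (Fin n) k →ₐ[k] R ⧸ I := (Ideal.Quotient.mkₐ k I).comp P with hh
    have hhsurj : Function.Surjective h :=
      (Ideal.Quotient.mkₐ_surjective k I).comp hsurj
    have hle : h.range ≤ g.range := by
      have : h = aeval (h ∘ X) := aeval_unique h
      rw [this, ← Algebra.adjoin_range_eq_range_aeval]
      apply Algebra.adjoin_le
      rintro _ ⟨j, rfl⟩
      rcases (splitEquiv n m hmn).surjective j with ⟨j', rfl⟩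
      rcases j' with i | s
      · have hzero : h (X (splitEquiv n m hmn (Sum.inl i))) = 0 := by
          have : P (X (Fin.castLE hmn i)) ∈ I :=
            Ideal.subset_span ⟨i, rfl⟩
          simpa [hh, splitEquiv_inl, Ideal.Quotient.eq_zero_iff_mem] using this
        simp only [Function.comp_apply, hzero]
        exact Subalgebra.zero_mem _
      · refine ⟨X s, ?_⟩
        show Ideal.Quotient.mk I (P (rename Subtype.val (X s))) = _
        rw [rename_X]
        rfl
    rw [eq_top_iff]
    intro y _
    obtain ⟨a, rfl⟩ := hhsurj y
    exact hle ⟨a, rfl⟩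
  -- kernel of g is J
  have hgker : RingHom.ker g.toRingHom = J := by
    apply le_antisymm
    · -- hard direction
      intro q hq
      have hmem : P (rename Subtype.val q) ∈ I := by
        rw [RingHom.mem_ker] at hq
        have := hq
        rw [← Ideal.Quotient.eq_zero_iff_mem]
        exact this
      have hI' : I = Ideal.map P.toRingHom
          (Ideal.span (Set.range fun i : Fin m => (X (Fin.castLE hmn i) : MvPolynomial (Fin n) k))) := by
        rw [Ideal.map_span, ← Set.range_comp]
        rfl
      have hcomap : rename (Subtype.val : σ₂ → Fin n) q ∈
          Ideal.span (Set.range fun i : Fin m => (X (Fin.castLE hmn i) : MvPolynomial (Fin n) k))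
            ⊔ RingHom.ker P.toRingHom := by
        have h0 : rename (Subtype.val : σ₂ → Fin n) q ∈ Ideal.comap P.toRingHom I := by
          rw [Ideal.mem_comap]; exact hmem
        rw [hI', Ideal.comap_map_of_surjective P.toRingHom hsurj,
          ← RingHom.ker_eq_comap_bot] at h0
        exact h0
      rw [hker, ← Ideal.span_union] at hcomap
      have hC : (C q : MvPolynomial (Fin m) B) ∈
          Ideal.map (Φ : MvPolynomial (Fin n) k →+* MvPolynomial (Fin m) B)
            (Ideal.span ((Set.range fun i : Fin m =>
              (X (Fin.castLE hmn i) : MvPolynomial (Fin n) k)) ∪ S)) := by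
        rw [← splitAlgEquiv_rename k n m hmn q]
        exact Ideal.mem_map_of_mem _ hcomap
      rw [Ideal.map_span, Set.image_union] at hC
      -- apply the evaluation at 0
      set ε : MvPolynomial (Fin m) B →ₐ[B] B := aeval (fun _ => (0 : B)) with hε
      have hq' : q ∈ Ideal.map ε.toRingHom
          (Ideal.span (⇑Φ '' (Set.range fun i : Fin m =>
              (X (Fin.castLE hmn i) : MvPolynomial (Fin n) k)) ∪ ⇑(Φ : MvPolynomial (Fin n) k →+* MvPolynomial (Fin m) B) '' S)) := by
        have : q = ε (C q) := by simp [hε]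
        rw [this]
        exact Ideal.mem_map_of_mem _ hC
      rw [Ideal.map_span] at hq'
      refine Ideal.span_le.2 ?_ hq'
      rintro _ ⟨x, hx, rfl⟩
      rcases hx with ⟨_, ⟨i, rfl⟩, rfl⟩ | hx
      · rw [splitAlgEquiv_X k n m hmn i]
        have hX0 : ε.toRingHom (X i) = 0 := by simp [hε]
        rw [hX0]
        exact J.zero_mem
      · rw [himg] at hx
        obtain ⟨s, hs, rfl⟩ := hx
        have : ε.toRingHom (C s) = s := by simp [hε]
        rw [this]
        exact Ideal.subset_span hs
    · rw [hJ, Ideal.span_le]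
      intro q hq
      have h1 : P (rename (Subtype.val : σ₂ → Fin n) q) = 0 := by
        have : rename (Subtype.val : σ₂ → Fin n) q ∈ RingHom.ker P.toRingHom := by
          rw [hker]; exact Ideal.subset_span hq
        rwa [RingHom.mem_ker] at this
      show q ∈ RingHom.ker g.toRingHom
      rw [RingHom.mem_ker]
      simp [hgapp, h1]
  -- assemble the isomorphisms
  have e1 : (MvPolynomial (Fin n) k ⧸ RingHom.ker P.toRingHom) ≃ₐ[k] R :=
    Ideal.quotientKerAlgEquivOfSurjective hsurj
  have e2 : (MvPolynomial (Fin n) k ⧸ RingHom.ker P.toRingHom) ≃ₐ[k]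
      (MvPolynomial (Fin m) B ⧸ Ideal.map (C : B →+* MvPolynomial (Fin m) B) J) :=
    Ideal.quotientEquivAlg (RingHom.ker P.toRingHom)
      (Ideal.map (C : B →+* MvPolynomial (Fin m) B) J) Φ hmapker.symm
  have e3 : MvPolynomial (Fin m) (B ⧸ J) ≃ₐ[B]
      (MvPolynomial (Fin m) B ⧸ Ideal.map (C : B →+* MvPolynomial (Fin m) B) J) :=
    MvPolynomial.quotientEquivQuotientMvPolynomial J
  have e4 : (B ⧸ J) ≃ₐ[k] (R ⧸ I) := by
    rw [← hgker]
    exact Ideal.quotientKerAlgEquivOfSurjective hgsurj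
  exact ⟨e1.symm.trans (e2.trans (((AlgEquiv.restrictScalars k e3).symm).trans
    (mapAlgEquiv (Fin m) e4)))⟩
end
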